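/- Let q > 2 be a prime power, let t ∈ 𝔽_q^*, and let f(x) = x^{q−2} + t·x^{q²−q−1}. If f is a permutation polynomial of 𝔽_{q²}, then one of the following holds: (i) t = 1 and q ≡ 1 (mod 4); (ii) t = −3 and q ≡ ±1 (mod 12); (iii) t = 3 and q ≡ −1 (mod 6). -/

import Mathlib

open Finset Polynomial

-- sum of N-th powers over a finite field
lemma aux_sum_pow {K : Type} [Field K] [Fintype K] [DecidableEq K] (N : ℕ) (hN : N ≠ 0) :
    ∑ x : K, x ^ N = if (Fintype.card K - 1) ∣ N then (-1 : K) else 0 := by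
  let φ : Kˣ ↪ K := ⟨fun x ↦ x, Units.val_injective⟩
  have huniv : (univ.map φ) = univ \ {0} := by
    ext x
    simpa only [mem_map, mem_univ, Function.Embedding.coeFn_mk, true_and, mem_sdiff,
      mem_singleton, φ] using (show (∃ a : Kˣ, (a:K) = x) ↔ x ≠ 0 from isUnit_iff_ne_zero)
  calc ∑ x : K, x ^ N = ∑ x ∈ univ \ {(0:K)}, x ^ N := by
        rw [← sum_sdiff ({0} : Finset K).subset_univ, sum_singleton, zero_pow hN, add_zero]
    _ = ∑ x : Kˣ, ((x : K) ^ N) := by simp [φ, ← huniv, univ.sum_map φ]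
    _ = _ := FiniteField.sum_pow_units K N

lemma aux_binom {K : Type} [Field K] (p m q : ℕ) [Fact p.Prime] [CharP K p]
    (hq : q = p ^ m) (hm : m ≠ 0) (k : ℕ) :
    (((2*q-2).choose k : ℕ) : K)
      = ∑ ij ∈ Finset.HasAntidiagonal.antidiagonal k,
          (if ij.1 < q then (-1:K)^ij.1 else 0) * (if ij.2 < q then (-1:K)^ij.2 else 0) := by
  have hppos : 2 ≤ p := (Fact.out : p.Prime).two_le
  have hq2 : 2 ≤ q := by
    rw [hq]
    calc 2 ≤ p := hppos
    _ = p ^ 1 := (pow_one p).symm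
    _ ≤ p ^ m := Nat.pow_le_pow_right (by omega) (by omega)
  set H : K[X] := ∑ i ∈ range q, C ((-1:K)^i) * X^i with hH
  have hH_coeff : ∀ n, H.coeff n = if n < q then (-1:K)^n else 0 := by
    intro n
    rw [hH, finset_sum_coeff]
    simp only [coeff_C_mul, coeff_X_pow]
    by_cases hn : n < q
    · rw [if_pos hn, Finset.sum_eq_single n]
      · simp
      · intro b _ hbn
        simp [Ne.symm hbn]
      · intro hcon
        exact absurd (mem_range.mpr hn) hcon
    · rw [if_neg hn]
      apply Finset.sum_eq_zero
      intro b hb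
      have hbn : n ≠ b := by rw [mem_range] at hb; omega
      simp [hbn]
  have hCX : ∀ i : ℕ, C ((-1:K)^i) * X^i = (-X)^i := by
    intro i
    have hx : (-X : K[X]) = C (-1) * X := by simp
    rw [hx, mul_pow, ← C_pow]
  have hgeom : H * (X + 1) = 1 - (-X:K[X])^q := by
    have h1 : H = ∑ i ∈ range q, (-X:K[X])^i := by
      exact Finset.sum_congr rfl (fun i _ => hCX i)
    have h0 := geom_sum_mul (-X : K[X]) q
    rw [h1]
    linear_combination -h0
  have hHX : (X + 1) * H = X^q + 1 := by
    rw [mul_comm, hgeom]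
    rcases Nat.even_or_odd p with hp2 | hpodd
    · have hp2' : p = 2 := ((Fact.out : p.Prime).even_iff).mp hp2
      haveI : CharP K 2 := by rwa [hp2'] at ‹CharP K p›
      have hqe : Even q := by
        rw [hq, hp2']
        exact (Nat.even_pow).mpr ⟨even_iff_two_dvd.mpr dvd_rfl, hm⟩
      rw [hqe.neg_pow, CharTwo.sub_eq_add]
      ring
    · have hqodd : Odd q := by rw [hq]; exact hpodd.pow
      rw [hqodd.neg_pow]
      ring
  have hfrob : ((X+1 : K[X]))^q = X^q + 1 := by
    rw [hq, add_pow_char_pow, one_pow]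
  have key : ((X+1 : K[X]))^(2*q-2) = H * H := by
    have hne : ((X+1 : K[X]))^2 ≠ 0 := pow_ne_zero 2 (by
      intro h
      have h0 := congrArg (fun f => Polynomial.coeff f 0) h
      simp at h0)
    apply mul_right_cancel₀ hne
    rw [← pow_add]
    have h24 : 2*q-2+2 = 2*q := by omega
    rw [h24]
    calc (X+1 : K[X])^(2*q) = ((X+1)^q)^2 := by rw [← pow_mul, mul_comm]
    _ = (X^q+1)^2 := by rw [hfrob]
    _ = ((X+1) * H)^2 := by rw [hHX]
    _ = H * H * (X+1)^2 := by ring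
  have hc := coeff_X_add_one_pow K (2*q-2) k
  rw [← hc, key, coeff_mul]
  exact Finset.sum_congr rfl (fun ij _ => by rw [hH_coeff, hH_coeff])

lemma aux_choose_lt {K : Type} [Field K] (p m q : ℕ) [Fact p.Prime] [CharP K p]
    (hq : q = p ^ m) (hm : m ≠ 0) (k : ℕ) (hkq : k < q) :
    (((2*q-2).choose k : ℕ) : K) = (-1:K)^k * ((k+1 : ℕ) : K) := by
  rw [aux_binom p m q hq hm k, Finset.Nat.sum_antidiagonal_eq_sum_range_succ_mk]
  have hcong : ∀ i ∈ range (k+1),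
      (if i < q then (-1:K)^i else 0) * (if k - i < q then (-1:K)^(k-i) else 0) = (-1:K)^k := by
    intro i hi
    rw [mem_range] at hi
    rw [if_pos (by omega), if_pos (by omega), ← pow_add]
    congr 1
    omega
  rw [Finset.sum_congr rfl hcong, Finset.sum_const, card_range, nsmul_eq_mul]
  ring

lemma aux_choose_ge {K : Type} [Field K] (p m q : ℕ) [Fact p.Prime] [CharP K p]
    (hq : q = p ^ m) (hm : m ≠ 0) (k : ℕ) (hkq : q ≤ k) (hk2 : k ≤ 2*q-2) :
    (((2*q-2).choose k : ℕ) : K) = (-1:K)^k * ((2*q-1-k : ℕ) : K) := by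
  have hq1 : 1 ≤ q := by
    rw [hq]; exact Nat.one_le_pow m p (by have := (Fact.out : p.Prime).two_le; omega)
  rw [aux_binom p m q hq hm k, Finset.Nat.sum_antidiagonal_eq_sum_range_succ_mk]
  have hcong : ∀ i ∈ range (k+1),
      (if i < q then (-1:K)^i else 0) * (if k - i < q then (-1:K)^(k-i) else 0)
      = if i ∈ Ico (k+1-q) q then (-1:K)^k else 0 := by
    intro i hi
    rw [mem_range] at hi
    simp only [mem_Ico]
    by_cases h1 : i < q
    · by_cases h2 : k - i < q
      · rw [if_pos h1, if_pos h2, if_pos (show k+1-q ≤ i ∧ i < q by omega), ← pow_add]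
        congr 1
        omega
      · rw [if_pos h1, if_neg h2, mul_zero,
          if_neg (show ¬(k+1-q ≤ i ∧ i < q) by omega)]
    · rw [if_neg h1, zero_mul, if_neg (show ¬(k+1-q ≤ i ∧ i < q) by omega)]
  rw [Finset.sum_congr rfl hcong, ← Finset.sum_filter]
  have hfil : (range (k+1)).filter (fun i => i ∈ Ico (k+1-q) q) = Ico (k+1-q) q := by
    ext i
    simp only [mem_filter, mem_range, mem_Ico]
    omega
  rw [hfil, Finset.sum_const, Nat.card_Ico, nsmul_eq_mul]
  have : q - (k+1-q) = 2*q-1-k := by omega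
  rw [this]
  ring

lemma aux_L2 {K : Type} [Field K] [Fintype K] (p m q r : ℕ) [Fact p.Prime] [CharP K p]
    (hq : q = p ^ m) (hm : m ≠ 0) (hK : Fintype.card K = q^2) (hqr : q = 2*r+1) (hr : 1 ≤ r)
    (h3 : (-3:K)^r = -1) : q % 3 = 2 := by
  classical
  have hp := (Fact.out : p.Prime)
  have hq3 : 3 ≤ q := by
    rcases Nat.lt_or_ge q 3 with h | h
    · interval_cases q <;> omega
    · exact h
  have hp2 : p ≠ 2 := by
    rintro rfl
    have : Even q := by
      rw [hq]
      exact (Nat.even_pow).mpr ⟨even_iff_two_dvd.mpr dvd_rfl, hm⟩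
    obtain ⟨u, hu⟩ := this
    omega
  have h2K : (2:K) ≠ 0 := by
    rw [show ((2:K)) = ((2:ℕ):K) by norm_num, Ne, CharP.cast_eq_zero_iff K p 2]
    intro hdvd
    have hle := Nat.le_of_dvd (by norm_num) hdvd
    have := hp.two_le
    exact hp2 (by omega)
  have hfrobK : ∀ a b : K, (a+b)^q = a^q + b^q := by
    intro a b
    rw [hq, add_pow_char_pow]
  have h01 : q % 3 = 0 ∨ q % 3 = 1 ∨ q % 3 = 2 := by omega
  rcases h01 with h0 | h1 | h2
  · -- q ≡ 0 mod 3 : char 3, -3 = 0, contradiction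
    exfalso
    have h3p : p = 3 := by
      have hd : (3:ℕ) ∣ p^m := by rw [← hq]; omega
      exact ((Nat.prime_dvd_prime_iff_eq (by norm_num) hp).mp
        (Nat.Prime.dvd_of_dvd_pow (by norm_num) hd)).symm
    have h3K : (3:K) = 0 := by
      rw [show ((3:K)) = ((3:ℕ):K) by norm_num, CharP.cast_eq_zero_iff K p 3, h3p]
    rw [show (-3:K) = -(3:K) by norm_num, h3K, neg_zero, zero_pow (by omega : r ≠ 0)] at h3
    exact h2K (by linear_combination 2*h3)
  · -- q ≡ 1 mod 3 : -3 is a square of an element of 𝔽_q, contradiction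
    exfalso
    haveI : Fact (Nat.Prime 3) := ⟨by norm_num⟩
    have hcard : Fintype.card Kˣ = q^2 - 1 := by rw [Fintype.card_units, hK]
    have hqq : (q-1)*(q+1) = q^2-1 := by
      have e3 : q^2 = q*q := sq q
      obtain ⟨n, rfl⟩ := Nat.exists_eq_add_of_le (show 1 ≤ q by omega)
      rw [show 1+n-1 = n by omega, show 1+n+1 = n+2 by omega]
      have e1 : (1+n)*(1+n) = n*n+2*n+1 := by ring
      have e2 : n*(n+2) = n*n+2*n := by ring
      omega
    have hdvd3 : 3 ∣ Fintype.card Kˣ := by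
      rw [hcard, ← hqq]
      exact Dvd.dvd.mul_right (by omega : (3:ℕ) ∣ q-1) (q+1)
    obtain ⟨ω', hω'⟩ := exists_prime_orderOf_dvd_card 3 hdvd3
    set ω : K := (ω' : K) with hωdef
    have hω3 : ω^3 = 1 := by
      have h := pow_orderOf_eq_one ω'
      rw [hω'] at h
      rw [hωdef, ← Units.val_pow_eq_pow_val, h, Units.val_one]
    have hω1 : ω ≠ 1 := by
      intro h
      have hu : ω' = 1 := Units.ext (by rw [Units.val_one]; exact h)
      rw [hu] at hω'
      simp at hω'
    have hquad : ω^2 + ω + 1 = 0 := by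
      have hfactor : (ω - 1)*(ω^2+ω+1) = 0 := by linear_combination hω3
      rcases mul_eq_zero.mp hfactor with h | h
      · exact absurd (by linear_combination h) hω1
      · exact h
    have h2q : (2:K)^q = 2 := by
      rw [show ((2:K)) = 1+1 by norm_num, hfrobK]
      norm_num
    have hωq : ω^q = ω := by
      conv_lhs => rw [show q = 3*(q/3)+1 by omega]
      rw [pow_add, pow_mul, hω3, one_pow, pow_one, one_mul]
    set s : K := 1 + 2*ω with hs
    have hs2 : s^2 = -3 := by rw [hs]; linear_combination 4*hquad
    have hsq : s^q = s := by
      rw [hs, hfrobK, mul_pow, h2q, hωq, one_pow]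
    have hs0 : s ≠ 0 := by
      intro h0
      rw [hs] at h0
      have h30 : (3:K) = 0 := by linear_combination 4*hquad - (1+2*ω)*h0
      have hdp : (p:ℕ) ∣ 3 := by
        rwa [show ((3:K)) = ((3:ℕ):K) by norm_num, CharP.cast_eq_zero_iff K p 3] at h30
      have hp3 : p = 3 := (Nat.prime_dvd_prime_iff_eq hp (by norm_num)).mp hdp
      have : (3:ℕ) ∣ q := by rw [hq, hp3]; exact dvd_pow_self 3 hm
      omega
    have hsq1 : s^(q-1) = 1 := by
      have h' : s^(q-1)*s = 1*s := by
        rw [← pow_succ, show q-1+1 = q by omega, hsq, one_mul]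
      exact mul_right_cancel₀ hs0 h'
    have hm3 : (-3:K)^r = 1 := by
      rw [← hs2, ← pow_mul, show 2*r = q-1 by omega]
      exact hsq1
    have hcontra : (1:K) = -1 := hm3.symm.trans h3
    exact h2K (by linear_combination hcontra)
  · exact h2

lemma aux_omega {K : Type} [Field K] [Fintype K] [DecidableEq K] (p : ℕ) [Fact p.Prime] [CharP K p]
    (hp3 : p ≠ 3) (hdvd3 : 3 ∣ Fintype.card Kˣ) :
    ∃ ω : K, ω^3 = 1 ∧ ω ≠ 1 ∧ ω^2+ω+1 = 0 ∧ (1+2*ω)^2 = -3 ∧ (1+2*ω) ≠ 0 := by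
  classical
  have hp := (Fact.out : p.Prime)
  haveI : Fact (Nat.Prime 3) := ⟨by norm_num⟩
  obtain ⟨ω', hω'⟩ := exists_prime_orderOf_dvd_card 3 hdvd3
  refine ⟨(ω' : K), ?_, ?_, ?_, ?_, ?_⟩
  case _ =>
    have h := pow_orderOf_eq_one ω'
    rw [hω'] at h
    rw [← Units.val_pow_eq_pow_val, h, Units.val_one]
  case _ =>
    intro h
    have hu : ω' = 1 := Units.ext (by rw [Units.val_one]; exact h)
    rw [hu] at hω'
    simp at hω'
  all_goals {
    have hω3 : ((ω' : K))^3 = 1 := by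
      have h := pow_orderOf_eq_one ω'
      rw [hω'] at h
      rw [← Units.val_pow_eq_pow_val, h, Units.val_one]
    have hω1 : ((ω' : K)) ≠ 1 := by
      intro h
      have hu : ω' = 1 := Units.ext (by rw [Units.val_one]; exact h)
      rw [hu] at hω'
      simp at hω'
    have hquad : ((ω' : K))^2 + (ω' : K) + 1 = 0 := by
      have hfactor : ((ω' : K) - 1)*(((ω' : K))^2+(ω' : K)+1) = 0 := by linear_combination hω3
      rcases mul_eq_zero.mp hfactor with h | h
      · exact absurd (by linear_combination h) hω1
      · exact h
    have hs0 : (1 + 2*(ω' : K)) ≠ 0 := by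
      intro h0
      have h30 : (3:K) = 0 := by linear_combination 4*hquad - (1+2*(ω' : K))*h0
      have hdp : (p:ℕ) ∣ 3 := by
        rwa [show ((3:K)) = ((3:ℕ):K) by norm_num, CharP.cast_eq_zero_iff K p 3] at h30
      exact hp3 ((Nat.prime_dvd_prime_iff_eq hp (by norm_num)).mp hdp)
    first
      | exact hquad
      | (exact (by linear_combination 4*hquad : (1+2*(ω' : K))^2 = -3))
      | exact hs0
  }

lemma aux_L1 {K : Type} [Field K] [Fintype K] (p m q r : ℕ) [Fact p.Prime] [CharP K p]
    (hq : q = p ^ m) (hm : m ≠ 0) (hK : Fintype.card K = q^2) (hqr : q = 2*r+1) (hr : 1 ≤ r)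
    (h3 : (3:K)^r = 1) : q % 12 = 1 ∨ q % 12 = 11 := by
  classical
  have hp := (Fact.out : p.Prime)
  have hq3 : 3 ≤ q := by omega
  have hp2 : p ≠ 2 := by
    rintro rfl
    have : Even q := by
      rw [hq]
      exact (Nat.even_pow).mpr ⟨even_iff_two_dvd.mpr dvd_rfl, hm⟩
    obtain ⟨u, hu⟩ := this
    omega
  have h2K : (2:K) ≠ 0 := by
    rw [show ((2:K)) = ((2:ℕ):K) by norm_num, Ne, CharP.cast_eq_zero_iff K p 2]
    intro hdvd
    have hle := Nat.le_of_dvd (by norm_num) hdvd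
    have := hp.two_le
    exact hp2 (by omega)
  have hfrobK : ∀ a b : K, (a+b)^q = a^q + b^q := by
    intro a b
    rw [hq, add_pow_char_pow]
  have h2q : (2:K)^q = 2 := by
    rw [show ((2:K)) = 1+1 by norm_num, hfrobK]
    norm_num
  have hq30 : q % 3 ≠ 0 := by
    intro h0
    have h3p : p = 3 := by
      have hd : (3:ℕ) ∣ p^m := by rw [← hq]; omega
      exact ((Nat.prime_dvd_prime_iff_eq (by norm_num) hp).mp
        (Nat.Prime.dvd_of_dvd_pow (by norm_num) hd)).symm
    have h3K : (3:K) = 0 := by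
      rw [show ((3:K)) = ((3:ℕ):K) by norm_num, CharP.cast_eq_zero_iff K p 3, h3p]
    rw [h3K, zero_pow (by omega : r ≠ 0)] at h3
    exact zero_ne_one h3
  have hp3 : p ≠ 3 := by
    rintro rfl
    have : (3:ℕ) ∣ q := by rw [hq]; exact dvd_pow_self 3 hm
    omega
  have hcard : Fintype.card Kˣ = q^2 - 1 := by rw [Fintype.card_units, hK]
  have hqq : (q-1)*(q+1) = q^2-1 := by
    have e3 : q^2 = q*q := sq q
    obtain ⟨n, rfl⟩ := Nat.exists_eq_add_of_le (show 1 ≤ q by omega)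
    rw [show 1+n-1 = n by omega, show 1+n+1 = n+2 by omega]
    have e1 : (1+n)*(1+n) = n*n+2*n+1 := by ring
    have e2 : n*(n+2) = n*n+2*n := by ring
    omega
  rcases (by omega : q % 3 = 1 ∨ q % 3 = 2) with h31 | h32
  · -- q ≡ 1 mod 3
    left
    have hdvd3 : 3 ∣ Fintype.card Kˣ := by
      rw [hcard, ← hqq]
      exact Dvd.dvd.mul_right (by omega : (3:ℕ) ∣ q-1) (q+1)
    obtain ⟨ω, hω3, hω1, hquad, hs2, hs0⟩ := aux_omega p hp3 hdvd3
    have hωq : ω^q = ω := by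
      conv_lhs => rw [show q = 3*(q/3)+1 by omega]
      rw [pow_add, pow_mul, hω3, one_pow, pow_one, one_mul]
    have hsq : (1+2*ω)^q = 1+2*ω := by
      rw [hfrobK, mul_pow, h2q, hωq, one_pow]
    have hsq1 : (1+2*ω)^(q-1) = 1 := by
      have h' : (1+2*ω)^(q-1)*(1+2*ω) = 1*(1+2*ω) := by
        rw [← pow_succ, show q-1+1 = q by omega, hsq, one_mul]
      exact mul_right_cancel₀ hs0 h'
    have hm3 : (-3:K)^r = 1 := by
      rw [← hs2, ← pow_mul, show 2*r = q-1 by omega]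
      exact hsq1
    have hm1r : (-1:K)^r = 1 := by
      have he : ((-1:K)*3)^r = (-1:K)^r * (3:K)^r := mul_pow _ _ r
      rw [h3, mul_one, show ((-1:K)*3) = -3 by norm_num, hm3] at he
      exact he.symm
    have hre : r % 2 = 0 := by
      by_contra hodd
      rw [(Nat.odd_iff.mpr (by omega : r % 2 = 1)).neg_one_pow] at hm1r
      exact h2K (by linear_combination -hm1r)
    omega
  · -- q ≡ 2 mod 3
    rcases (by omega : q % 4 = 1 ∨ q % 4 = 3) with h41 | h43
    · exfalso
      obtain ⟨g, hg⟩ := IsCyclic.exists_generator (α := Kˣ)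
      have horder : orderOf g = q^2-1 := by
        rw [orderOf_eq_card_of_forall_mem_zpowers hg, Nat.card_eq_fintype_card, hcard]
      set b : ℕ := r*(r+1) with hbdef
      have hnb : q^2-1 = 4*b := by
        rw [← hqq, hqr, show 2*r+1-1 = 2*r by omega, show 2*r+1+1 = 2*(r+1) by omega, hbdef]
        ring
      have hb1 : 1 ≤ b := by
        rw [hbdef]
        exact Nat.one_le_iff_ne_zero.mpr (Nat.mul_ne_zero (by omega) (by omega))
      have hgn : g^(q^2-1) = 1 := by
        rw [← horder]
        exact pow_orderOf_eq_one g
      have hi4 : (g^b)^4 = 1 := by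
        rw [← pow_mul, show b*4 = q^2-1 by omega]
        exact hgn
      have hi2ne : (g^b)^2 ≠ 1 := by
        rw [← pow_mul]
        intro hcon
        have hdvd := orderOf_dvd_of_pow_eq_one hcon
        rw [horder] at hdvd
        have hle := Nat.le_of_dvd (by omega : 0 < b*2) hdvd
        omega
      set iK : K := ((g^b : Kˣ) : K) with hiKdef
      have hiK2 : iK^2 = -1 := by
        have h4 : (iK^2)^2 = 1 := by
          rw [hiKdef, ← Units.val_pow_eq_pow_val, ← Units.val_pow_eq_pow_val, ← pow_mul,
            show (2*2 : ℕ) = 4 by norm_num, hi4, Units.val_one]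
        have hne : iK^2 ≠ 1 := by
          intro hcon
          apply hi2ne
          apply Units.ext
          rw [Units.val_pow_eq_pow_val, Units.val_one]
          rw [hiKdef] at hcon
          rw [← Units.val_pow_eq_pow_val] at hcon
          exact hcon
        rcases mul_eq_zero.mp (show (iK^2-1)*(iK^2+1) = 0 by linear_combination h4) with h | h
        · exact absurd (by linear_combination h) hne
        · linear_combination h
      have hiKq : iK^(q-1) = 1 := by
        obtain ⟨u, hu⟩ : (4:ℕ) ∣ q - 1 := by omega
        have he : b*(q-1) = (q^2-1)*u := by rw [hnb, hu]; ring
        rw [hiKdef, ← Units.val_pow_eq_pow_val, ← pow_mul, he, pow_mul, hgn, one_pow,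
          Units.val_one]
      have h3ne : (3:K) ≠ 0 := by
        rw [show ((3:K)) = ((3:ℕ):K) by norm_num, Ne, CharP.cast_eq_zero_iff K p 3]
        intro hdvd
        exact hp3 ((Nat.prime_dvd_prime_iff_eq hp (by norm_num)).mp hdvd)
      set u3 : Kˣ := Units.mk0 (3:K) h3ne with hu3def
      obtain ⟨a, ha⟩ : ∃ a : ℕ, g^a = u3 := by
        have hx := hg u3
        rw [← mem_powers_iff_mem_zpowers] at hx
        obtain ⟨a, ha⟩ := hx
        exact ⟨a, ha⟩
      have hu3r : u3^r = 1 := by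
        apply Units.ext
        rw [Units.val_pow_eq_pow_val, Units.val_one, hu3def, Units.val_mk0]
        exact h3
      have hgar : g^(a*r) = 1 := by rw [pow_mul, ha, hu3r]
      have hdvd_ar : (q^2-1) ∣ a*r := by
        rw [← horder]
        exact orderOf_dvd_of_pow_eq_one hgar
      obtain ⟨c, hc⟩ := hdvd_ar
      have ha2 : a = (q+1)*c*2 := by
        have h1 : a*r = ((q+1)*c*2)*r := by
          rw [hc, ← hqq, show q-1 = 2*r by omega]
          ring
        exact Nat.eq_of_mul_eq_mul_right (by omega) h1
      set yK : K := ((g^((q+1)*c) : Kˣ) : K) with hyKdef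
      have hy2 : yK^2 = 3 := by
        rw [hyKdef, ← Units.val_pow_eq_pow_val, ← pow_mul, show (q+1)*c*2 = a from ha2.symm, ha,
          hu3def, Units.val_mk0]
      have hyq : yK^(q-1) = 1 := by
        have he : (q+1)*c*(q-1) = (q^2-1)*c := by rw [← hqq]; ring
        rw [hyKdef, ← Units.val_pow_eq_pow_val, ← pow_mul, he, pow_mul, hgn, one_pow,
          Units.val_one]
      set w : K := iK * yK with hwdef
      have hw2 : w^2 = -3 := by rw [hwdef, mul_pow, hiK2, hy2]; ring
      have hwq1 : w^(q-1) = 1 := by rw [hwdef, mul_pow, hiKq, hyq, one_mul]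
      have hwq : w^q = w := by
        have h' : w^q = w^(q-1)*w := by rw [← pow_succ, show q-1+1 = q by omega]
        rw [h', hwq1, one_mul]
      have hdvd3 : 3 ∣ Fintype.card Kˣ := by
        rw [hcard, ← hqq]
        exact Dvd.dvd.mul_left (by omega : (3:ℕ) ∣ q+1) (q-1)
      obtain ⟨ω, hω3, hω1, hquad, hs2, hs0⟩ := aux_omega p hp3 hdvd3
      have hfacw : ((1+2*ω) - w)*((1+2*ω) + w) = 0 := by linear_combination hs2 - hw2
      have hsq : (1+2*ω)^q = 1+2*ω := by
        rcases mul_eq_zero.mp hfacw with h | h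
        · have hsw : (1+2*ω) = w := by linear_combination h
          rw [hsw, hwq]
        · have hsw : (1+2*ω) = -w := by linear_combination h
          have hodd : Odd q := ⟨r, by omega⟩
          rw [hsw, hodd.neg_pow, hwq]
      have hωq : ω^q = ω := by
        have h1 : (1+2*ω)^q = 1 + 2*ω^q := by rw [hfrobK, mul_pow, h2q, one_pow]
        rw [hsq] at h1
        have h2' : (2:K)*ω^q = 2*ω := by linear_combination -h1
        exact mul_left_cancel₀ h2K h2'
      have hωq2 : ω^q = ω^2 := by
        conv_lhs => rw [show q = 3*(q/3)+2 by omega]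
        rw [pow_add, pow_mul, hω3, one_pow, one_mul]
      have hωω : ω^2 = ω := hωq2.symm.trans hωq
      rcases mul_eq_zero.mp (show ω*(ω-1) = 0 by linear_combination hωω) with h | h
      · rw [h] at hquad
        simp at hquad
      · exact hω1 (by linear_combination h)
    · right
      omega

-- divisibility characterization
lemma aux_dvd_iff (q k : ℕ) (hq : 3 ≤ q) (hk : k ≤ 2*q-2) :
    ((q^2-1) ∣ (q-2)*k + (q^2-q-1)*(2*q-2-k)) ↔ (q+1) ∣ 2*(k+1) := by
  have hqq : q + 1 ≤ q^2 := by nlinarith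
  have h1 : 1 ≤ q^2 := by omega
  rw [← Int.natCast_dvd_natCast, ← Int.natCast_dvd_natCast]
  push_cast [Nat.cast_sub h1, Nat.cast_sub (show 2 ≤ q by omega), Nat.cast_sub hk,
    Nat.cast_sub (show q ≤ q^2 by nlinarith), Nat.cast_sub (show 1 ≤ q^2 - q by omega),
    Nat.cast_sub (show 2 ≤ 2*q by omega)]
  have key : ((q:ℤ)-2)*k + ((q:ℤ)^2-q-1)*(2*q-2-k)
      = (q-1)*(2*(k+1)) + ((q:ℤ)^2-1)*(2*(q-2) - k) := by ring
  rw [key]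
  have hd : ((q:ℤ)^2-1) ∣ ((q:ℤ)^2-1)*(2*(q-2) - k) := Dvd.intro _ rfl
  rw [dvd_add_left hd]
  have f1 : (q:ℤ)^2-1 = (q-1)*(q+1) := by ring
  rw [f1]
  rw [mul_dvd_mul_iff_left (show ((q:ℤ)-1) ≠ 0 by omega)]

lemma aux_kset (q k r : ℕ) (hq : q = 2*r+1) (hr : 2 ≤ r) (hk : k ≤ 2*q-2)
    (hdvd : (q+1) ∣ 2*(k+1)) : k = r ∨ k = q ∨ k = 3*r+2 := by
  obtain ⟨c, hc⟩ := hdvd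
  have hc1 : 1 ≤ c := by
    rcases Nat.eq_zero_or_pos c with h | h
    · subst h; simp at hc
    · omega
  have hc4 : c < 4 := by
    by_contra h
    push_neg at h
    have : (q+1)*4 ≤ (q+1)*c := Nat.mul_le_mul_left _ h
    omega
  interval_cases c <;> omega

/-- Necessity: let `q > 2` be a prime power, `t ∈ 𝔽_q^*`, and
`f(x) = x^(q-2) + t·x^(q²-q-1)`. If `f` is a permutation polynomial of `𝔽_{q²}`,
then (i) `t = 1`, `q ≡ 1 (mod 4)`, or (ii) `t = -3`, `q ≡ ±1 (mod 12)`, or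
(iii) `t = 3`, `q ≡ -1 (mod 6)`. -/
theorem stmt_4 (p m q : ℕ) (hp : p.Prime) (hq : q = p ^ m) (hq2 : 2 < q)
    (K : Type) [Field K] [Fintype K] (hK : Fintype.card K = q ^ 2)
    (t : K) (ht0 : t ≠ 0) (htq : t ^ q = t)
    (hbij : Function.Bijective (fun x : K => x ^ (q - 2) + t * x ^ (q ^ 2 - q - 1))) :
    (t = 1 ∧ q % 4 = 1) ∨
    (t = -3 ∧ (q % 12 = 1 ∨ q % 12 = 11)) ∨
    (t = 3 ∧ q % 6 = 5) := by
  classical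
  haveI : Fact p.Prime := ⟨hp⟩
  have hm : m ≠ 0 := by
    rintro rfl
    rw [pow_zero] at hq
    omega
  -- characteristic of K is p
  haveI hKp : CharP K p := by
    obtain ⟨pp, hpp⟩ := CharP.exists K
    haveI := hpp
    obtain ⟨n, hppp, hcard⟩ := FiniteField.card K pp
    have : pp ∣ q^2 := by
      rw [← hK, hcard]
      exact dvd_pow_self pp (by exact_mod_cast n.2.ne')
    have hdvd : pp ∣ p := by
      have h2 : pp ∣ p^(m*2) := by
        rwa [hq, ← pow_mul] at this
      exact hppp.dvd_of_dvd_pow h2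
    have : pp = p := ((Nat.prime_dvd_prime_iff_eq hppp hp).mp hdvd)
    rwa [this] at hpp
  have hq3 : 3 ≤ q := hq2
  have hqq : q^2 = q*q := sq q
  have h9 : 3*q ≤ q*q := Nat.mul_le_mul_right q (by omega)
  have hqK : ((q : ℕ) : K) = 0 := by
    rw [hq]
    push_cast
    rw [CharP.cast_eq_zero K p]
    exact zero_pow hm
  -- Step 1: the power sum vanishes
  have hsum0 : ∑ x : K, (x ^ (q-2) + t * x ^ (q^2-q-1)) ^ (2*q-2) = 0 := by
    have hb := Fintype.sum_bijective _ hbij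
      (fun x : K => (x ^ (q-2) + t * x ^ (q^2-q-1)) ^ (2*q-2))
      (fun y : K => y ^ (2*q-2)) (fun x => rfl)
    rw [hb]
    apply FiniteField.sum_pow_lt_card_sub_one
    rw [hK, hqq]
    omega
  -- Step 2: expansion
  have hexp : ∀ x : K, (x ^ (q-2) + t * x ^ (q^2-q-1)) ^ (2*q-2)
      = ∑ k ∈ range (2*q-1), (((2*q-2).choose k : ℕ) : K) * t^(2*q-2-k)
          * x ^ ((q-2)*k + (q^2-q-1)*(2*q-2-k)) := by
    intro x
    rw [add_pow, show 2*q-2+1 = 2*q-1 by omega]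
    refine Finset.sum_congr rfl (fun k hk => ?_)
    rw [mul_pow, ← pow_mul, ← pow_mul]
    ring
  -- Step 3: swap sums and evaluate
  have hswap : (0:K) = ∑ k ∈ range (2*q-1),
      (((2*q-2).choose k : ℕ) : K) * t^(2*q-2-k) *
        (if (q^2-1) ∣ ((q-2)*k + (q^2-q-1)*(2*q-2-k)) then (-1:K) else 0) := by
    calc (0:K) = ∑ x : K, (x ^ (q-2) + t * x ^ (q^2-q-1)) ^ (2*q-2) := hsum0.symm
    _ = ∑ x : K, ∑ k ∈ range (2*q-1), (((2*q-2).choose k : ℕ) : K) * t^(2*q-2-k)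
          * x ^ ((q-2)*k + (q^2-q-1)*(2*q-2-k)) := Finset.sum_congr rfl (fun x _ => hexp x)
    _ = ∑ k ∈ range (2*q-1), ∑ x : K, (((2*q-2).choose k : ℕ) : K) * t^(2*q-2-k)
          * x ^ ((q-2)*k + (q^2-q-1)*(2*q-2-k)) := Finset.sum_comm
    _ = _ := by
        refine Finset.sum_congr rfl (fun k hk => ?_)
        rw [← Finset.mul_sum]
        congr 1
        have hM : (q-2)*k + (q^2-q-1)*(2*q-2-k) ≠ 0 := by
          rw [mem_range] at hk
          rcases Nat.eq_or_lt_of_le (Nat.lt_succ_iff.mp (by omega : k < (2*q-2)+1)) with h | h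
          · have h1 : (q-2)*k = (q-2)*(2*q-2) := by rw [h]
            have h2 : 1 ≤ (q-2)*(2*q-2) := by
              apply Nat.one_le_iff_ne_zero.mpr
              apply Nat.mul_ne_zero <;> omega
            omega
          · have h2 : 1 ≤ (q^2-q-1)*(2*q-2-k) := by
              apply Nat.one_le_iff_ne_zero.mpr
              apply Nat.mul_ne_zero <;> omega
            omega
        rw [aux_sum_pow _ hM, hK]
  -- Step 4: filtered sum
  have hswap2 : (0:K) = ∑ k ∈ (range (2*q-1)).filter (fun k => (q+1) ∣ 2*(k+1)),
      -((((2*q-2).choose k : ℕ) : K) * t^(2*q-2-k)) := by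
    rw [Finset.sum_filter]
    refine hswap.trans (Finset.sum_congr rfl (fun k hk => ?_))
    rw [mem_range] at hk
    by_cases hc : (q+1) ∣ 2*(k+1)
    · rw [if_pos hc, if_pos ((aux_dvd_iff q k hq3 (by omega)).mpr hc)]
      ring
    · rw [if_neg hc, if_neg (fun h => hc ((aux_dvd_iff q k hq3 (by omega)).mp h)), mul_zero]
  rcases Nat.even_or_odd q with hqe | hqo
  · -- q even : contradiction
    exfalso
    have hq4 : 4 ≤ q := by
      obtain ⟨u, hu⟩ := hqe
      omega
    have hfil : (range (2*q-1)).filter (fun k => (q+1) ∣ 2*(k+1)) = {q} := by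
      ext k
      simp only [mem_filter, mem_range, mem_singleton]
      constructor
      · rintro ⟨hk, hd⟩
        obtain ⟨c, hc⟩ := hd
        rcases Nat.even_or_odd c with ⟨c', hc'⟩ | hodd
        · subst hc'
          have hring : (q+1)*(c'+c') = 2*((q+1)*c') := by ring
          have h1 : k + 1 = (q+1)*c' := by omega
          have hc'1 : c' = 1 := by
            by_contra h
            rcases Nat.lt_or_ge c' 1 with h0 | h2
            · have h0' : c' = 0 := by omega
              subst h0'
              simp at h1
            · have h2' : 2 ≤ c' := by omega
              have hmul := Nat.mul_le_mul_left (q+1) h2'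
              omega
          subst hc'1
          omega
        · exfalso
          have : Odd ((q+1)*c) := by
            refine Odd.mul ?_ hodd
            obtain ⟨u, hu⟩ := hqe
            exact ⟨u, by omega⟩
          rw [← hc] at this
          obtain ⟨w, hw⟩ := this
          omega
      · rintro rfl
        exact ⟨by omega, ⟨2, by ring⟩⟩
    rw [hfil, Finset.sum_singleton] at hswap2
    have hcq := aux_choose_ge (K := K) p m q hq hm q le_rfl (by omega)
    rw [show 2*q-1-q = q-1 by omega] at hcq
    have hq1K : ((q-1 : ℕ) : K) = -1 := by
      rw [Nat.cast_sub (by omega : 1 ≤ q), hqK, Nat.cast_one, zero_sub]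
    rw [hcq, hq1K, hqe.neg_one_pow] at hswap2
    have hz : t^(2*q-2-q) = 0 := by linear_combination -hswap2
    exact ht0 (pow_eq_zero_iff (by omega : 2*q-2-q ≠ 0) |>.mp hz)
  · obtain ⟨r, hqr⟩ := hqo
    have hr1 : 1 ≤ r := by omega
    -- p is odd
    have hp2 : p ≠ 2 := by
      rintro rfl
      have : Even q := by
        rw [hq]
        exact (Nat.even_pow).mpr ⟨even_iff_two_dvd.mpr dvd_rfl, hm⟩
      obtain ⟨u, hu⟩ := this
      omega
    have h2K : (2:K) ≠ 0 := by
      rw [show ((2:K)) = ((2:ℕ):K) by norm_num, Ne, CharP.cast_eq_zero_iff K p 2]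
      intro hdvd
      have hle := Nat.le_of_dvd (by norm_num) hdvd
      have := hp.two_le
      exact hp2 (by omega)
    rcases eq_or_lt_of_le hr1 with hr1' | hr2
    · -- q = 3 : contradiction
      exfalso
      have hq3' : q = 3 := by omega
      have hfil : (range (2*q-1)).filter (fun k => (q+1) ∣ 2*(k+1)) = {1, 3} := by
        ext k
        simp only [mem_filter, mem_range, mem_insert, mem_singleton]
        rw [hq3']
        omega
      rw [hfil, Finset.sum_insert (by simp), Finset.sum_singleton] at hswap2
      have c1 := aux_choose_lt (K := K) p m q hq hm 1 (by omega)
      have c3 := aux_choose_ge (K := K) p m q hq hm 3 (by omega) (by omega)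
      rw [show 2*q-1-3 = 2 by omega] at c3
      rw [c1, c3] at hswap2
      have h4t : (4:K) * t = 0 := by
        have e1 : t^(2*q-2-1) = t := by
          rw [show 2*q-2-1 = q by omega, htq]
        have e3 : t^(2*q-2-3) = t := by
          rw [show 2*q-2-3 = 1 by omega, pow_one]
        rw [e1, e3] at hswap2
        push_cast at hswap2 ⊢
        linear_combination -hswap2
      rcases mul_eq_zero.mp h4t with h4 | h4
      · have : (p:ℕ) ∣ 4 := by
          rwa [show ((4:K)) = ((4:ℕ):K) by norm_num, CharP.cast_eq_zero_iff K p 4] at h4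
        have hp3 : p = 3 := by
          have : p ∣ 3 := by
            rw [show (3:ℕ) = q from hq3'.symm, hq]
            exact dvd_pow_self p hm
          have h3p : p = 3 := (Nat.prime_dvd_prime_iff_eq hp (by norm_num)).mp this
          exact h3p
        rw [hp3] at this
        omega
      · exact ht0 h4
    · -- main case : q = 2r+1, r ≥ 2
      have hfil : (range (2*q-1)).filter (fun k => (q+1) ∣ 2*(k+1)) = {r, q, 3*r+2} := by
        ext k
        simp only [mem_filter, mem_range, mem_insert, mem_singleton]
        constructor
        · rintro ⟨hk, hd⟩
          exact aux_kset q k r hqr hr2 (by omega) hd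
        · rintro (rfl | rfl | rfl)
          · exact ⟨by omega, ⟨1, by omega⟩⟩
          · exact ⟨by omega, ⟨2, by omega⟩⟩
          · exact ⟨by omega, ⟨3, by omega⟩⟩
      rw [hfil, Finset.sum_insert (by simp only [mem_insert, mem_singleton]; push_neg; omega),
        Finset.sum_insert (by simp only [mem_singleton]; omega),
        Finset.sum_singleton] at hswap2
      have c1 := aux_choose_lt (K := K) p m q hq hm r (by omega)
      have c2 := aux_choose_ge (K := K) p m q hq hm q le_rfl (by omega)
      have c3 := aux_choose_ge (K := K) p m q hq hm (3*r+2) (by omega) (by omega)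
      rw [show 2*q-1-q = 2*r by omega] at c2
      rw [show 2*q-1-(3*r+2) = r-1 by omega] at c3
      set ε : K := (-1:K)^r with hεdef
      set τ : K := t^r with hτdef
      -- cast facts
      have hq0' : 2*((r:ℕ):K) + 1 = 0 := by
        have h0 := hqK
        rw [hqr] at h0
        push_cast at h0
        linear_combination h0
      have hc1v : (((2*q-2).choose r : ℕ) : K) * 2 = ε := by
        rw [c1]
        push_cast
        linear_combination ((-1:K)^r)*hq0'
      have hc2v : (((2*q-2).choose q : ℕ) : K) = 1 := by
        rw [c2]
        have : (-1:K)^q = -1 := Odd.neg_one_pow ⟨r, by omega⟩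
        rw [this]
        push_cast
        linear_combination -hq0'
      have hc3v : (((2*q-2).choose (3*r+2) : ℕ) : K) * 2 = -3*ε := by
        rw [c3]
        have hs3 : (-1:K)^(3*r+2) = ε := by
          rw [hεdef, pow_add, show 3*r = r*3 by ring, pow_mul, ← pow_mul, mul_comm r 3, pow_mul]
          norm_num
        rw [hs3, Nat.cast_sub hr1]
        push_cast
        linear_combination ((-1:K)^r)*hq0'
      -- power facts
      have h2rone : t^(2*r) = 1 := by
        have h' : t^(2*r)*t = 1*t := by
          rw [← pow_succ, show 2*r+1 = q by omega, htq, one_mul]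
        exact mul_right_cancel₀ ht0 h'
      have hτ2 : τ^2 = 1 := by
        rw [hτdef, ← pow_mul, mul_comm r 2]
        exact h2rone
      have hT1 : t^(2*q-2-r) = τ^3 := by
        rw [show 2*q-2-r = r*3 by omega, pow_mul]
      have hT2 : t^(2*q-2-q)*t = 1 := by
        rw [← pow_succ, show 2*q-2-q+1 = 2*r by omega]
        exact h2rone
      have hT3 : t^(2*q-2-(3*r+2))*t^2 = τ := by
        rw [← pow_add, show 2*q-2-(3*r+2)+2 = r by omega]
      set ζ : K := ε*τ with hζdef
      have hζsq : ζ^2 = 1 := by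
        rw [hζdef, mul_pow, hτ2, hεdef, ← pow_mul, mul_comm r 2, pow_mul]
        norm_num
      have key : ζ*t^2 + 2*t - 3*ζ = 0 := by
        rw [hζdef]
        linear_combination (2*t^2)*hswap2 - t^2*(t^(2*q-2-r))*hc1v
          - 2*t^2*(t^(2*q-2-q))*hc2v - t^2*(t^(2*q-2-(3*r+2)))*hc3v
          - ε*t^2*hT1 - ε*τ*t^2*hτ2 - 2*t*hT2 + 3*ε*hT3
      have hfac : (t + ζ - 2)*(t + ζ + 2) = 0 := by
        linear_combination ζ*key + (4-t^2)*hζsq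
      have hζpm : (ζ - 1)*(ζ + 1) = 0 := by linear_combination hζsq
      have hε2 : ε^2 = 1 := by
        rw [hεdef, ← pow_mul, mul_comm r 2, pow_mul]
        norm_num
      rcases mul_eq_zero.mp hζpm with hζ1 | hζm1
      · -- ζ = 1
        have hζ1' : ζ = 1 := by linear_combination hζ1
        rcases mul_eq_zero.mp hfac with hfa | hfb
        · -- t = 1
          have ht1 : t = 1 := by linear_combination hfa - hζ1
          left
          refine ⟨ht1, ?_⟩
          have hτ1 : τ = 1 := by rw [hτdef, ht1, one_pow]
          have hεe : ε = 1 := by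
            rw [hζdef, hτ1, mul_one] at hζ1'
            exact hζ1'
          have hre : r % 2 = 0 := by
            by_contra hodd
            have hro : Odd r := Nat.odd_iff.mpr (by omega)
            rw [hεdef, hro.neg_one_pow] at hεe
            exact h2K (by linear_combination -hεe)
          omega
        · -- t = -3
          have ht3 : t = -3 := by linear_combination hfb - hζ1
          right; left
          refine ⟨ht3, ?_⟩
          have h3r : (3:K)^r = 1 := by
            have : (3:K) = (-1)*(-3) := by norm_num
            rw [this, mul_pow, ← hεdef, ← ht3, ← hτdef, ← hζdef]
            exact hζ1'
          exact aux_L1 p m q r hq hm hK hqr hr1 h3r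
      · -- ζ = -1
        have hζm1' : ζ = -1 := by linear_combination hζm1
        rcases mul_eq_zero.mp hfac with hfa | hfb
        · -- t = 3
          have ht3 : t = 3 := by linear_combination hfa - hζm1
          right; right
          refine ⟨ht3, ?_⟩
          have h3r : (-3:K)^r = -1 := by
            have : (-3:K) = (-1)*(3) := by norm_num
            rw [this, mul_pow, ← hεdef, ← ht3, ← hτdef, ← hζdef]
            exact hζm1'
          have hq32 : q % 3 = 2 := aux_L2 p m q r hq hm hK hqr hr1 h3r
          omega
        · -- t = -1 : contradiction
          exfalso
          have htm1 : t = -1 := by linear_combination hfb - hζm1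
          have hτε : τ = ε := by rw [hτdef, htm1, hεdef]
          rw [hζdef, hτε] at hζm1'
          have : (ε:K)^2 = -1 := by rw [pow_two]; exact hζm1'
          rw [hε2] at this
          exact h2K (by linear_combination this)
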